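/- arXiv:1811.08828 — 4 statements merged into one kernel-verified Lean document; each statement's English description precedes it below -/
import Mathlib

section
/- For a locally injective holomorphic function f on a domain in ℂ, the classical Schwarzian derivative satisfies S(f) = 2B(|dz|², f*|dz|²), i.e. f''' / f' - (3/2)(f''/f')² = 2(η_{zz} - η_z²) where η = ln|f'| = (1/2)(log f' + conj(log f')). -/
/-- The Wirtinger derivative `∂/∂z = (1/2)(∂/∂x - i ∂/∂y)` of a map `ℂ → ℂ`. -/
noncomputable def wderiv (g : ℂ → ℂ) (z : ℂ) : ℂ :=
  (fderiv ℝ g z 1 - Complex.I * fderiv ℝ g z Complex.I) / 2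

lemma wderiv_congr {h₁ h₂ : ℂ → ℂ} {z : ℂ} (h : h₁ =ᶠ[nhds z] h₂) :
    wderiv h₁ z = wderiv h₂ z := by
  unfold wderiv; rw [h.fderiv_eq]

lemma wderiv_eq_deriv (h : ℂ → ℂ) (z : ℂ) (hh : DifferentiableAt ℂ h z) :
    wderiv h z = deriv h z := by
  have hd := (hh.hasDerivAt.hasFDerivAt.restrictScalars ℝ).fderiv
  rw [wderiv, hd]
  simp [smul_eq_mul]
  have : Complex.I * Complex.I = -1 := Complex.I_mul_I
  linear_combination (-deriv h z / 2) * this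

lemma wderiv_log_abs (g : ℂ → ℂ) (z : ℂ) (hg : DifferentiableAt ℂ g z) (hz : g z ≠ 0) :
    wderiv (fun w => (Real.log (‖g w‖) : ℂ)) z = deriv g z / (2 * g z) := by
  set a := g z with ha
  set b := deriv g z with hb
  have hn : (g z).re * (g z).re + (g z).im * (g z).im ≠ 0 := by
    have := Complex.normSq_pos.2 hz
    rw [Complex.normSq_apply] at this
    exact this.ne'
  have hB : HasFDerivAt g ((ContinuousLinearMap.smulRight (1 : ℂ →L[ℂ] ℂ) b).restrictScalars ℝ) z :=
    (hg.hasDerivAt.hasFDerivAt).restrictScalars ℝ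
  have hu : HasFDerivAt (fun w => (g w).re)
      (Complex.reCLM.comp ((ContinuousLinearMap.smulRight (1 : ℂ →L[ℂ] ℂ) b).restrictScalars ℝ)) z :=
    Complex.reCLM.hasFDerivAt.comp z hB
  have hv : HasFDerivAt (fun w => (g w).im)
      (Complex.imCLM.comp ((ContinuousLinearMap.smulRight (1 : ℂ →L[ℂ] ℂ) b).restrictScalars ℝ)) z :=
    Complex.imCLM.hasFDerivAt.comp z hB
  have hN := (hu.mul hu).add (hv.mul hv)
  have hlog := ((Real.hasDerivAt_log hn).comp_hasFDerivAt z hN).const_smul (2⁻¹ : ℝ)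
  have hη := Complex.ofRealCLM.hasFDerivAt.comp z hlog
  have heq : (fun w => (Real.log (‖g w‖) : ℂ))
      = (⇑Complex.ofRealCLM ∘ fun w => (2⁻¹ : ℝ) • (Real.log ∘ fun x => (g x).re * (g x).re + (g x).im * (g x).im) w) := by
    funext w
    simp only [Function.comp, smul_eq_mul, Complex.ofRealCLM_apply]
    rw [Complex.norm_def, Real.log_sqrt (Complex.normSq_nonneg _), Complex.normSq_apply]
    push_cast
    ring
  rw [wderiv, heq]
  erw [hη.fderiv]
  simp [Complex.ext_iff, Complex.div_re, Complex.div_im, Complex.normSq_apply, smul_eq_mul]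
  have hn' : (g z).re ^ 2 + (g z).im ^ 2 ≠ 0 := by rw [pow_two, pow_two]; exact hn
  have hD1 : ((g z).re ^ 2 * 4 + (g z).im ^ 2 * 4) * ((g z).re ^ 2 * 4 + (g z).im ^ 2 * 4)⁻¹ = 1 := by
    apply mul_inv_cancel₀; intro h; apply hn'; linarith
  have hD2 : ((g z).im ^ 2 * 4 + (g z).re ^ 2 * 4) * ((g z).im ^ 2 * 4 + (g z).re ^ 2 * 4)⁻¹ = 1 := by
    apply mul_inv_cancel₀; intro h; apply hn'; linarith
  constructor
  · field_simp
    simp only [ha]; field_simp; ring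
  · field_simp
    simp only [ha]; field_simp; ring

/-- The classical Schwarzian derivative `S(f) = (f''/f')' - (1/2)(f''/f')²`. -/
noncomputable def schwarzianDeriv (f : ℂ → ℂ) (z : ℂ) : ℂ :=
  deriv (fun w => deriv (deriv f) w / deriv f w) z
    - (1 / 2) * (deriv (deriv f) z / deriv f z) ^ 2

/-- For a locally injective holomorphic `f` on a simply connected domain, the
classical Schwarzian satisfies `S(f) = 2 B(|dz|², f*|dz|²) = 2(η_{zz} - η_z²)`
for `η = ln|f'|`. -/
theorem schwarzian_eq_twice_metric_schwarzian
    (Ω : Set ℂ) (hΩ : IsOpen Ω) (hconn : IsPreconnected Ω)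
    (hsc : SimplyConnectedSpace Ω)
    (f : ℂ → ℂ) (hf : DifferentiableOn ℂ f Ω)
    (hf' : ∀ z ∈ Ω, deriv f z ≠ 0) :
    ∀ z ∈ Ω,
      schwarzianDeriv f z =
        2 * (wderiv (wderiv (fun w => (Real.log (‖deriv f w‖) : ℂ))) z
          - (wderiv (fun w => (Real.log (‖deriv f w‖) : ℂ)) z) ^ 2) := by
  intro z hz
  have hA : AnalyticOnNhd ℂ f Ω := hf.analyticOnNhd hΩ
  have hg : AnalyticOnNhd ℂ (deriv f) Ω := hA.deriv
  have hg2 : AnalyticOnNhd ℂ (deriv (deriv f)) Ω := hg.deriv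
  -- inner wderiv identity on Ω
  have hη : ∀ w ∈ Ω, wderiv (fun w => (Real.log (‖deriv f w‖) : ℂ)) w
      = deriv (deriv f) w / (2 * deriv f w) := fun w hw =>
    wderiv_log_abs (deriv f) w ((hg w hw).differentiableAt) (hf' w hw)
  have hev : (wderiv (fun w => (Real.log (‖deriv f w‖) : ℂ)))
      =ᶠ[nhds z] (fun w => deriv (deriv f) w / (2 * deriv f w)) :=
    Filter.eventually_of_mem (hΩ.mem_nhds hz) hη
  have houter : wderiv (wderiv (fun w => (Real.log (‖deriv f w‖) : ℂ))) z
      = deriv (fun w => deriv (deriv f) w / (2 * deriv f w)) z := by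
    rw [wderiv_congr hev]
    exact wderiv_eq_deriv _ z
      (((hg2 z hz).differentiableAt).div
        (((hg z hz).differentiableAt).const_mul 2)
        (by simpa using hf' z hz))
  have hsplit : (fun w => deriv (deriv f) w / (2 * deriv f w))
      = fun w => (1/2 : ℂ) * (deriv (deriv f) w / deriv f w) := by
    funext w; ring
  have hdiv : DifferentiableAt ℂ (fun w => deriv (deriv f) w / deriv f w) z :=
    ((hg2 z hz).differentiableAt).div ((hg z hz).differentiableAt) (hf' z hz)
  have hD : deriv (fun w => deriv (deriv f) w / (2 * deriv f w)) z
      = (1/2 : ℂ) * deriv (fun w => deriv (deriv f) w / deriv f w) z := by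
    rw [hsplit, deriv_const_mul _ hdiv]
  rw [houter, hD, hη z hz, schwarzianDeriv]
  ring
end

section
/- Given the first and second fundamental forms I(σ) = (4/σ)|B|² + (1/4)(1-K)²σ + 2(1-K)Re(B) and II(σ) = (4/σ)|B|² - (1/4)(1-K²)σ - 2K·Re(B) of an Epstein surface, the extrinsic Gaussian curvature det(I⁻¹ II) equals (4K + (1-K)² - (16/σ²)|B|²) / ((1-K)² - (16/σ²)|B|²), so the Gaussian curvature K(I) = -1 + det(I⁻¹II) equals 4K / ((1-K)² - (16/σ²)|B|²), provided the denominator is nonzero. -/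
/-- The symmetric 2×2 matrix of the real part of the quadratic differential
`B dz²` in the coordinates `(x,y)`, `z = x + iy`:
`Re(B dz²) = Re B (dx² - dy²) - 2 Im B dx dy`. -/
def reQuadDiff (B : ℂ) : Matrix (Fin 2) (Fin 2) ℝ :=
  !![B.re, -B.im; -B.im, -B.re]

/-- Pointwise extrinsic curvature identity for Epstein surfaces: with
`I = ((4/σ)|B|² + (1/4)(1-K)²σ)·g₀ + 2(1-K) Re(B dz²)` and
`II = ((4/σ)|B|² - (1/4)(1-K²)σ)·g₀ - 2K Re(B dz²)`, one has
`det(I⁻¹ II) = (4K + (1-K)² - (16/σ²)|B|²)/((1-K)² - (16/σ²)|B|²)`, hence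
`K(I) = -1 + det(I⁻¹II) = 4K/((1-K)² - (16/σ²)|B|²)`. -/
theorem epstein_gauss_curvature_identity (σ K : ℝ) (B : ℂ) (hσ : 0 < σ)
    (hnd : (1 - K) ^ 2 * σ ^ 2 ≠ 16 * Complex.normSq B)
    (I I2 : Matrix (Fin 2) (Fin 2) ℝ)
    (hI : I = ((4 / σ) * Complex.normSq B + (1 / 4) * (1 - K) ^ 2 * σ)
        • (1 : Matrix (Fin 2) (Fin 2) ℝ) + (2 * (1 - K)) • reQuadDiff B)
    (hII : I2 = ((4 / σ) * Complex.normSq B - (1 / 4) * (1 - K ^ 2) * σ)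
        • (1 : Matrix (Fin 2) (Fin 2) ℝ) - (2 * K) • reQuadDiff B) :
    (I⁻¹ * I2).det
        = (4 * K + (1 - K) ^ 2 - 16 * Complex.normSq B / σ ^ 2)
          / ((1 - K) ^ 2 - 16 * Complex.normSq B / σ ^ 2) ∧
    -1 + (I⁻¹ * I2).det
        = 4 * K / ((1 - K) ^ 2 - 16 * Complex.normSq B / σ ^ 2) := by
  have hσ0 : σ ≠ 0 := hσ.ne'
  have hn : B.re ^ 2 + B.im ^ 2 = Complex.normSq B := by
    simp [Complex.normSq_apply]; ring
  have hdI : I.det = ((4 / σ) * Complex.normSq B - (1 / 4) * (1 - K) ^ 2 * σ) ^ 2 := by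
    subst hI
    simp [reQuadDiff, Matrix.det_fin_two, Matrix.smul_apply, Matrix.one_apply,
      Matrix.add_apply]
    rw [← hn]; field_simp; ring
  have hdII : I2.det = ((4 / σ) * Complex.normSq B - (1 / 4) * (1 - K ^ 2) * σ) ^ 2
      - 4 * K ^ 2 * Complex.normSq B := by
    subst hII
    simp [reQuadDiff, Matrix.det_fin_two, Matrix.smul_apply, Matrix.one_apply,
      Matrix.sub_apply, Matrix.add_apply]
    rw [← hn]; field_simp; ring
  have hdet : ((1 - K) ^ 2 - 16 * Complex.normSq B / σ ^ 2) ≠ 0 := by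
    intro h
    apply hnd
    field_simp at h
    linarith
  have hI0 : I.det ≠ 0 := by
    rw [hdI]
    intro h
    apply hnd
    have := pow_eq_zero_iff (n := 2) (by norm_num) |>.mp h
    field_simp at this
    linarith
  have key : (I⁻¹ * I2).det
      = (4 * K + (1 - K) ^ 2 - 16 * Complex.normSq B / σ ^ 2)
          / ((1 - K) ^ 2 - 16 * Complex.normSq B / σ ^ 2) := by
    rw [Matrix.det_mul, Matrix.det_nonsing_inv, hdI, hdII]
    rw [Ring.inverse_eq_inv, inv_mul_eq_div,
      div_eq_div_iff (by rw [← hdI]; exact hI0) hdet]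
    field_simp
    ring
  refine ⟨key, ?_⟩
  have h2 : (4 * K + (1 - K) ^ 2 - 16 * Complex.normSq B / σ ^ 2)
      = 4 * K + ((1 - K) ^ 2 - 16 * Complex.normSq B / σ ^ 2) := by ring
  rw [key, h2, add_div, div_self hdet]
  ring
end

section
/- With I(σ) and II(σ) as for an Epstein surface, the mean curvature H = (1/2)tr(I⁻¹ II) equals (K² - 1 - (16/σ²)|B|²) / ((K-1)² - (16/σ²)|B|²), provided the denominator is nonzero. -/
set_option maxHeartbeats 1000000 in
/-- Pointwise mean curvature identity for Epstein surfaces: with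
`I = ((4/σ)|B|² + (1/4)(1-K)²σ)·g₀ + 2(1-K) Re(B dz²)` and
`II = ((4/σ)|B|² - (1/4)(1-K²)σ)·g₀ - 2K Re(B dz²)`, one has
`(1/2)tr(I⁻¹ II) = (K² - 1 - (16/σ²)|B|²)/((K-1)² - (16/σ²)|B|²)`. -/
theorem epstein_mean_curvature_identity (σ K : ℝ) (B : ℂ) (hσ : 0 < σ)
    (hnd : (K - 1) ^ 2 * σ ^ 2 ≠ 16 * Complex.normSq B)
    (I I2 : Matrix (Fin 2) (Fin 2) ℝ)
    (hI : I = ((4 / σ) * Complex.normSq B + (1 / 4) * (1 - K) ^ 2 * σ)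
        • (1 : Matrix (Fin 2) (Fin 2) ℝ) + (2 * (1 - K)) • reQuadDiff B)
    (hII : I2 = ((4 / σ) * Complex.normSq B - (1 / 4) * (1 - K ^ 2) * σ)
        • (1 : Matrix (Fin 2) (Fin 2) ℝ) - (2 * K) • reQuadDiff B) :
    (1 / 2) * (I⁻¹ * I2).trace
      = (K ^ 2 - 1 - 16 * Complex.normSq B / σ ^ 2)
        / ((K - 1) ^ 2 - 16 * Complex.normSq B / σ ^ 2) := by
  have hσ0 : σ ≠ 0 := ne_of_gt hσ
  set n := Complex.normSq B with hn
  set p := B.re with hp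
  set q := B.im with hq
  have hpq : n = p ^ 2 + q ^ 2 := by
    simp [hn, Complex.normSq_apply, hp, hq]; ring
  set a : ℝ := (4 / σ) * n + (1 / 4) * (1 - K) ^ 2 * σ with ha
  set c : ℝ := (4 / σ) * n - (1 / 4) * (1 - K ^ 2) * σ with hc
  have hI' : I = !![a + 2 * (1 - K) * p, -(2 * (1 - K) * q);
                    -(2 * (1 - K) * q), a - 2 * (1 - K) * p] := by
    subst hI
    ext i j
    fin_cases i <;> fin_cases j <;>
      simp [reQuadDiff, Matrix.one_apply, ha, ← hp, ← hq] <;> ring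
  have hII' : I2 = !![c - 2 * K * p, 2 * K * q;
                      2 * K * q, c + 2 * K * p] := by
    subst hII
    ext i j
    fin_cases i <;> fin_cases j <;>
      simp [reQuadDiff, Matrix.one_apply, hc, ← hp, ← hq] <;> ring
  set D : ℝ := 4 / σ * n - 1 / 4 * (1 - K) ^ 2 * σ with hD
  have hkey : D ≠ 0 := by
    intro h
    apply hnd
    have : 4 / σ * n = 1 / 4 * (1 - K) ^ 2 * σ := by rw [hD] at h; linarith
    field_simp at this
    nlinarith [this]
  have hD2 : D ^ 2 ≠ 0 := pow_ne_zero _ hkey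
  have hdet : I.det = D ^ 2 := by
    rw [hI', Matrix.det_fin_two_of, ha, hD, hpq]; field_simp; ring
  have hd0 : I.det ≠ 0 := by rw [hdet]; exact hD2
  have hden : (K - 1) ^ 2 - 16 * n / σ ^ 2 ≠ 0 := by
    intro h
    apply hnd
    field_simp at h
    nlinarith [h]
  have htr : (I⁻¹ * I2).trace = (2 * a * c + 8 * K * (1 - K) * n) / D ^ 2 := by
    rw [Matrix.inv_def, Ring.inverse_eq_inv, Matrix.smul_mul, Matrix.trace_smul, hdet,
      hI', hII', Matrix.adjugate_fin_two_of, div_eq_inv_mul, smul_eq_mul]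
    congr 1
    simp [Matrix.trace_fin_two, Matrix.mul_apply, Fin.sum_univ_two]
    rw [hpq]
    ring
  rw [htr, mul_div_assoc', div_eq_div_iff hD2 hden, ha, hc, hD]
  simp only [hpq]
  field_simp
  ring
end

section
/- If σ solves the k-surface equation 4K(σ) = k((1-K(σ))² - (16/σ²)|B(σ)|²) with -1 < k < 0, and τ = f(k)σ with f(k) = (1-√(1+k))/(1+√(1+k)), then τ solves (2+k)(1+K(τ))² + 2√(1+k)(1-K(τ)²) + 16(2√(1+k) - 2 - k)|B(τ)|²/τ² = 0. -/
/-- If `σ` solves the k-surface equation `4K = k((1-K)² - 16|B|²/σ²)` for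
`-1 < k < 0`, then the rescaled metric `τ = f(k)σ` with
`f(k) = (1-√(1+k))/(1+√(1+k))` (so `K(τ) = K/f(k)` and
`|B(τ)|²/τ² = |B|²/(f(k)²σ²)`) solves the scaled equation
`(2+k)(1+K(τ))² + 2√(1+k)(1-K(τ)²) + 16(2√(1+k)-2-k)|B(τ)|²/τ² = 0`. -/
theorem scaled_k_surface_equation (k σ b K : ℝ) (hk : k ∈ Set.Ioo (-1 : ℝ) 0)
    (hσ : 0 < σ) (hb : 0 ≤ b)
    (hsol : 4 * K = k * ((1 - K) ^ 2 - 16 * b / σ ^ 2))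
    (f K' b' : ℝ)
    (hf : f = (1 - Real.sqrt (1 + k)) / (1 + Real.sqrt (1 + k)))
    (hK' : K' = K / f) (hb' : b' = b / (f ^ 2 * σ ^ 2)) :
    (2 + k) * (1 + K') ^ 2 + 2 * Real.sqrt (1 + k) * (1 - K' ^ 2)
      + 16 * (2 * Real.sqrt (1 + k) - 2 - k) * b' = 0 := by
  obtain ⟨hk1, hk0⟩ := hk
  set s := Real.sqrt (1 + k) with hs
  have hs2 : s ^ 2 = 1 + k := Real.sq_sqrt (by linarith)
  have hs0 : 0 < s := Real.sqrt_pos.mpr (by linarith)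
  have hs1 : s < 1 := by nlinarith [hs2]
  have h1 : (1 : ℝ) - s ≠ 0 := by linarith
  have h2 : (1 : ℝ) + s ≠ 0 := by linarith
  have hσne : σ ≠ 0 := hσ.ne'
  have hKe : K' = K * (1 + s) / (1 - s) := by
    rw [hK', hf]; field_simp
  have hbe : b' = b * (1 + s) ^ 2 / ((1 - s) ^ 2 * σ ^ 2) := by
    rw [hb', hf]; field_simp
  have hsol2 : 4 * K * σ ^ 2 = k * ((1 - K) ^ 2 * σ ^ 2 - 16 * b) := by
    field_simp at hsol; linear_combination hsol
  rw [hKe, hbe]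
  field_simp
  rw [show k = s ^ 2 - 1 by linarith] at hsol2 ⊢
  linear_combination (1 + s) * (1 - s) * hsol2
end
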